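/- For every optimal conditional machine U there exists a constant c ∈ ℕ such that for every string x with C(x) = n and every string p with |p| = n and U(p, Λ) = x, letting y be the prefix of p of length ⌈n/2⌉, one has |C(x|y) − ⌊n/2⌋| ≤ c · log n (difference in ℤ). -/

import Mathlib

/-- A string is a finite binary string. -/
abbrev Str : Type := List Bool

/-- A conditional machine: a partial computable function mapping a pair of
strings `(p, y)` to a string. -/
abbrev CondMachine : Type := {V : Str × Str →. Str // Partrec V}

/-- `condC V x y` is `C_V(x|y)`: the least length of a program `p` with
`V (p, y) = x`, as an element of `ℕ∞` (it is `⊤` if no such `p` exists). -/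
noncomputable def condC (V : CondMachine) (x y : Str) : ℕ∞ :=
  sInf {n : ℕ∞ | ∃ p : Str, x ∈ V.1 (p, y) ∧ (p.length : ℕ∞) = n}

/-- A conditional machine `U` is optimal if for every conditional machine `V`
there is a constant `d` with `C_U(x|y) ≤ C_V(x|y) + d` for all `x, y`. -/
def OptimalMachine (U : CondMachine) : Prop :=
  ∀ V : CondMachine, ∃ d : ℕ, ∀ x y : Str, condC U x y ≤ condC V x y + (d : ℕ∞)

/-- For an optimal machine all complexities are finite natural numbers. -/
noncomputable def KC (U : CondMachine) (x y : Str) : ℕ := (condC U x y).toNat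

/-- `log2 n = Nat.log 2 (n + 2)`, so `log2 n ≥ 1`. -/
def log2 (n : ℕ) : ℕ := Nat.log 2 (n + 2)

/-! ### Auxiliary definitions -/

/-- Decode a binary string (little-endian-ish via foldr) to a natural number. -/
def b2n (l : List Bool) : ℕ := l.foldr (fun b m => 2 * m + cond b 1 0) 0

/-- Binary representation of a natural number. -/
def n2b : ℕ → List Bool
  | 0 => []
  | (n+1) => (decide ((n+1) % 2 = 1)) :: n2b ((n+1) / 2)
decreasing_by exact Nat.div_lt_self (Nat.succ_pos n) one_lt_two

lemma b2n_n2b : ∀ n, b2n (n2b n) = n := by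
  intro n
  induction n using Nat.strong_induction_on with
  | _ n ih =>
    match n with
    | 0 => simp [n2b, b2n]
    | (m+1) =>
      rw [n2b]
      have h2 : (m+1) / 2 < m + 1 := Nat.div_lt_self (Nat.succ_pos m) one_lt_two
      have := ih ((m+1)/2) h2
      simp only [b2n, List.foldr_cons] at *
      rw [this]
      rcases Nat.mod_two_eq_zero_or_one (m+1) with h | h <;>
        simp [h] <;> omega

lemma n2b_length (n : ℕ) : (n2b n).length ≤ Nat.log 2 n + 1 := by
  induction n using Nat.strong_induction_on with
  | _ n ih =>
    match n with
    | 0 => simp [n2b]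
    | 1 => rw [n2b]; simp [n2b]
    | (m+2) =>
      rw [n2b]
      have h2 : (m+1+1) / 2 < m + 1 + 1 := Nat.div_lt_self (Nat.succ_pos _) one_lt_two
      have := ih ((m+1+1)/2) h2
      have hlog : Nat.log 2 ((m+1+1) / 2) + 1 = Nat.log 2 (m+1+1) := by
        rw [Nat.log_div_base 2 (m+1+1)]
        have : 1 ≤ Nat.log 2 (m+1+1) := Nat.log_pos one_lt_two (by omega)
        omega
      simp only [List.length_cons]
      have he : Nat.log 2 (m+1+1) = Nat.log 2 (m+2) := rfl
      omega

/-- Explicit formula for `List.take` usable for primitive recursion. -/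
lemma take_eq_map_range (n : ℕ) (l : Str) :
    l.take n = (List.range (min n l.length)).map l.getI := by
  apply List.ext_getElem
  · simp
  · intro i h1 h2
    have hi : i < l.length := by simp at h1; omega
    simp [List.getElem_take, List.getI_eq_getElem _ hi]

/-- Explicit formula for `List.drop` usable for primitive recursion. -/
lemma drop_eq_map_range (n : ℕ) (l : Str) :
    l.drop n = (List.range (l.length - n)).map (fun i => l.getI (n + i)) := by
  apply List.ext_getElem
  · simp
  · intro i h1 h2
    have hi : n + i < l.length := by simp at h1; omega
    simp [List.getElem_drop, List.getI_eq_getElem _ hi]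

lemma primrec_take : Primrec₂ (fun (n : ℕ) (l : Str) => l.take n) := by
  have : Primrec₂ (fun (n : ℕ) (l : Str) =>
      (List.range (min n l.length)).map l.getI) :=
    Primrec.to₂ <| Primrec.list_map
      (Primrec.list_range.comp <|
        Primrec.nat_min.comp Primrec.fst (Primrec.list_length.comp Primrec.snd))
      (Primrec.to₂ (Primrec.list_getI.comp (Primrec.snd.comp Primrec.fst)
        Primrec.snd))
  exact this.of_eq fun n l => (take_eq_map_range n l).symm

lemma primrec_drop : Primrec₂ (fun (n : ℕ) (l : Str) => l.drop n) := by
  have : Primrec₂ (fun (n : ℕ) (l : Str) =>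
      (List.range (l.length - n)).map (fun i => l.getI (n + i))) :=
    Primrec.to₂ <| Primrec.list_map
      (Primrec.list_range.comp <|
        Primrec.nat_sub.comp (Primrec.list_length.comp Primrec.snd) Primrec.fst)
      (Primrec.to₂ (Primrec.list_getI.comp (Primrec.snd.comp Primrec.fst)
        (Primrec.nat_add.comp (Primrec.fst.comp Primrec.fst) Primrec.snd)))
  exact this.of_eq fun n l => (drop_eq_map_range n l).symm

lemma primrec_b2n : Primrec b2n := by
  have : Primrec fun (l : List Bool) =>
      l.foldr (fun b m => 2 * m + cond b 1 0) 0 :=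
    Primrec.list_foldr Primrec.id (Primrec.const 0) <| Primrec.to₂ <|
      Primrec.nat_add.comp
        (Primrec.nat_mul.comp (Primrec.const 2) (Primrec.snd.comp Primrec.snd))
        (Primrec.cond (Primrec.fst.comp Primrec.snd) (Primrec.const 1)
          (Primrec.const 0))
  exact this

/-- Decoder for the self-delimiting pair encoding. -/
def gdec (r : Str) : Str × Str :=
  let t := r.findIdx (fun b => !b)
  let s1 := r.drop (t + 1)
  let k := b2n (s1.take t)
  let s2 := s1.drop t
  (s2.drop k, s2.take k)

lemma primrec_gdec : Primrec gdec := by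
  have ht : Primrec fun r : Str => r.findIdx (fun b => !b) :=
    Primrec.list_findIdx Primrec.id (Primrec.to₂ (Primrec.not.comp Primrec.snd))
  have hs1 : Primrec fun r : Str => r.drop (r.findIdx (fun b => !b) + 1) :=
    primrec_drop.comp (Primrec.succ.comp ht) Primrec.id
  have hk : Primrec fun r : Str =>
      b2n ((r.drop (r.findIdx (fun b => !b) + 1)).take (r.findIdx (fun b => !b))) :=
    primrec_b2n.comp (primrec_take.comp ht hs1)
  have hs2 : Primrec fun r : Str =>
      (r.drop (r.findIdx (fun b => !b) + 1)).drop (r.findIdx (fun b => !b)) :=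
    primrec_drop.comp ht hs1
  exact (Primrec.pair (primrec_drop.comp hk hs2) (primrec_take.comp hk hs2))

lemma findIdx_replicate (t : ℕ) (rest : Str) :
    (List.replicate t true ++ false :: rest).findIdx (fun b => !b) = t := by
  induction t with
  | zero => simp [List.findIdx_cons]
  | succ n ih => simp [List.replicate_succ, List.findIdx_cons, ih]

lemma gdec_encode (y q : Str) :
    gdec (List.replicate (n2b y.length).length true ++
      false :: (n2b y.length ++ (y ++ q))) = (q, y) := by
  set bits := n2b y.length with hbits
  set t := bits.length
  have hidx : (List.replicate t true ++ false :: (bits ++ (y ++ q))).findIdx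
      (fun b => !b) = t := findIdx_replicate t _
  have hdrop : (List.replicate t true ++ false :: (bits ++ (y ++ q))).drop (t + 1)
      = bits ++ (y ++ q) := by
    have : List.replicate t true ++ false :: (bits ++ (y ++ q)) =
        (List.replicate t true ++ [false]) ++ (bits ++ (y ++ q)) := by simp
    rw [this, List.drop_left' (by simp)]
  have hkeq : b2n ((bits ++ (y ++ q)).take t) = y.length := by
    rw [List.take_left' rfl, hbits, b2n_n2b]
  have hs2 : (bits ++ (y ++ q)).drop t = y ++ q := List.drop_left' rfl
  simp only [gdec, hidx, hdrop, hkeq, hs2]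
  rw [List.drop_left' rfl, List.take_left' rfl]

/-! ### Basic facts about `condC` -/

lemma condC_le_of_mem {V : CondMachine} {x y p : Str} (h : x ∈ V.1 (p, y)) :
    condC V x y ≤ (p.length : ℕ∞) :=
  sInf_le ⟨p, h, rfl⟩

lemma exists_min_program {V : CondMachine} {x y : Str}
    (h : ∃ p, x ∈ V.1 (p, y)) :
    ∃ p, x ∈ V.1 (p, y) ∧ condC V x y = (p.length : ℕ∞) := by
  obtain ⟨p0, hp0⟩ := h
  set T : Set ℕ := {k | ∃ p : Str, x ∈ V.1 (p, y) ∧ p.length = k} with hT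
  have hTne : T.Nonempty := ⟨p0.length, p0, hp0, rfl⟩
  obtain ⟨p, hp, hlen⟩ := Nat.sInf_mem hTne
  refine ⟨p, hp, le_antisymm (condC_le_of_mem hp) ?_⟩
  refine le_sInf ?_
  rintro m ⟨q, hq, rfl⟩
  have : sInf T ≤ q.length := Nat.sInf_le ⟨q, hq, rfl⟩
  rw [← hlen] at this
  exact_mod_cast this

lemma condC_ne_top {V : CondMachine} {x y p : Str} (h : x ∈ V.1 (p, y)) :
    condC V x y ≠ ⊤ := by
  intro ht
  have h2 := condC_le_of_mem h
  rw [ht, top_le_iff] at h2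
  exact ENat.coe_ne_top _ h2

/-- If `p` is a shortest description of `x` (with `C(x) = n`), then the first
half of `p` is a string `y` with `C(x|y) = n/2 + O(log n)`. -/
theorem condC_half_description (U : CondMachine) (hU : OptimalMachine U) :
    ∃ c : ℕ, ∀ (x p : Str), ∀ n : ℕ, KC U x [] = n →
      p.length = n → x ∈ U.1 (p, []) →
      |(KC U x (p.take ((n + 1) / 2)) : ℤ) - ((n / 2 : ℕ) : ℤ)| ≤ (c : ℤ) * log2 n := by
  -- machine V: given (program q, condition y), run U on (y ++ q, [])
  set Vfun : Str × Str →. Str := fun z => U.1 (z.2 ++ z.1, []) with hVfun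
  have hVp : Partrec Vfun :=
    U.2.comp (Computable.pair
      (Computable.list_append.comp Computable.snd Computable.fst)
      (Computable.const ([] : Str)))
  obtain ⟨d1, hd1⟩ := hU ⟨Vfun, hVp⟩
  -- machine W: given (program r, condition _), decode r into (q, y), run U on it
  set Wfun : Str × Str →. Str := fun z => U.1 (gdec z.1) with hWfun
  have hWp : Partrec Wfun :=
    U.2.comp (primrec_gdec.to_comp.comp Computable.fst)
  obtain ⟨d2, hd2⟩ := hU ⟨Wfun, hWp⟩
  refine ⟨d1 + d2 + 5, ?_⟩
  intro x p n hKC hlen hmem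
  set y : Str := p.take ((n + 1) / 2) with hy
  set q0 : Str := p.drop ((n + 1) / 2) with hq0
  have hyq0 : y ++ q0 = p := List.take_append_drop _ _
  have hylen : y.length = (n + 1) / 2 := by
    rw [hy, List.length_take, hlen]; omega
  have hq0len : q0.length = n / 2 := by
    rw [hq0, List.length_drop, hlen]; omega
  -- condC U x [] = n
  have hUfin : condC U x [] ≠ ⊤ := condC_ne_top hmem
  have hUn : condC U x [] = (n : ℕ∞) := by
    rw [← hKC, KC, ENat.coe_toNat hUfin]
  -- x is produced by V from (q0, y)
  have hVmem : x ∈ Vfun (q0, y) := by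
    show x ∈ U.1 (y ++ q0, []); rw [hyq0]; exact hmem
  -- upper bound: condC U x y ≤ n/2 + d1
  have hupper : condC U x y ≤ ((n / 2 + d1 : ℕ) : ℕ∞) := by
    calc condC U x y ≤ condC ⟨Vfun, hVp⟩ x y + (d1 : ℕ∞) := hd1 x y
    _ ≤ (q0.length : ℕ∞) + (d1 : ℕ∞) :=
        add_le_add_left (condC_le_of_mem (V := ⟨Vfun, hVp⟩) hVmem) _
    _ = ((n / 2 + d1 : ℕ) : ℕ∞) := by rw [hq0len]; push_cast; rfl
  have hUyfin : condC U x y ≠ ⊤ := by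
    intro ht
    rw [ht, top_le_iff] at hupper
    exact ENat.coe_ne_top _ hupper
  -- take a minimal program q for (x, y)
  have hne : ∃ q, x ∈ U.1 (q, y) := by
    by_contra hc
    push_neg at hc
    apply hUyfin
    rw [condC]
    convert (sInf_empty : sInf (∅ : Set ℕ∞) = ⊤) using 2
    · rfl
    rw [Set.eq_empty_iff_forall_notMem]
    rintro m ⟨q, hq, rfl⟩
    exact hc q hq
  obtain ⟨q, hq, hqlen⟩ := exists_min_program hne
  set m : ℕ := KC U x y with hm
  have hmq : m = q.length := by rw [hm, KC, hqlen, ENat.toNat_coe]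
  -- lower bound via W
  set bits : Str := n2b y.length with hbits
  set s : ℕ := bits.length with hs
  set r : Str := List.replicate s true ++ false :: (bits ++ (y ++ q)) with hr
  have hWmem : x ∈ Wfun (r, []) := by
    show x ∈ U.1 (gdec r)
    rw [hr, gdec_encode y q]
    exact hq
  have hrlen : r.length = 2 * s + 1 + y.length + m := by
    rw [hr, hmq]; simp [s]; omega
  have hlower : (n : ℕ∞) ≤ ((2 * s + 1 + y.length + m + d2 : ℕ) : ℕ∞) := by
    calc (n : ℕ∞) = condC U x [] := hUn.symm
    _ ≤ condC ⟨Wfun, hWp⟩ x [] + (d2 : ℕ∞) := hd2 x []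
    _ ≤ (r.length : ℕ∞) + (d2 : ℕ∞) :=
        add_le_add_left (condC_le_of_mem (V := ⟨Wfun, hWp⟩) hWmem) _
    _ = ((2 * s + 1 + y.length + m + d2 : ℕ) : ℕ∞) := by rw [hrlen]; push_cast; rfl
  have hlowerN : n ≤ 2 * s + 1 + y.length + m + d2 := by exact_mod_cast hlower
  -- bound on s
  have hsbound : s ≤ log2 n + 1 := by
    have h1 : s ≤ Nat.log 2 y.length + 1 := n2b_length y.length
    have h2 : Nat.log 2 y.length ≤ Nat.log 2 (n + 2) :=
      Nat.log_mono_right (by omega)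
    calc s ≤ Nat.log 2 y.length + 1 := h1
    _ ≤ Nat.log 2 (n + 2) + 1 := by omega
    _ = log2 n + 1 := rfl
  -- bound on m from above
  have hmupper : m ≤ n / 2 + d1 := by
    have : condC U x y = (m : ℕ∞) := by rw [hm, KC, ENat.coe_toNat hUyfin]
    rw [this] at hupper
    exact_mod_cast hupper
  -- log2 n ≥ 1
  have hlog1 : 1 ≤ log2 n := Nat.log_pos one_lt_two (by omega)
  -- final arithmetic
  have hmlower : n / 2 ≤ m + 2 * s + 1 + d2 := by omega
  rw [abs_le]
  have h2 : (s : ℤ) ≤ (log2 n : ℤ) + 1 := by exact_mod_cast hsbound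
  have h3 : (1 : ℤ) ≤ (log2 n : ℤ) := by exact_mod_cast hlog1
  have hd2n : (0 : ℤ) ≤ (d2 : ℤ) := Int.natCast_nonneg d2
  have hd1n : (0 : ℤ) ≤ (d1 : ℤ) := Int.natCast_nonneg d1
  constructor
  · have h1 : ((n / 2 : ℕ) : ℤ) - (m : ℤ) ≤ 2 * (s : ℤ) + 1 + (d2 : ℤ) := by omega
    push_cast
    nlinarith [mul_nonneg hd2n (sub_nonneg.mpr h3), mul_nonneg hd1n (sub_nonneg.mpr h3)]
  · have h1 : (m : ℤ) - ((n / 2 : ℕ) : ℤ) ≤ (d1 : ℤ) := by omega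
    push_cast
    nlinarith [mul_nonneg hd1n (sub_nonneg.mpr h3), mul_nonneg hd2n (sub_nonneg.mpr h3)]
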